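/- Let e, f, g be points in the plane with f ≠ e ≠ g, and let e⁻ be a point whose distance to the segment ef and to the segment eg are each at most s. If θ ∈ (0, π) is the angle between ef and eg at e, then ‖e − e⁻‖ ≤ s / sin(θ/2). -/

import Mathlib

open EuclideanGeometry

open RealInnerProductSpace in
private lemma key_aux {E : Type*} [NormedAddCommGroup E] [InnerProductSpace ℝ E]
    (v p q : E) (co : ℝ) (hco : 0 ≤ co)
    (h : ⟪p, q⟫ = ‖p‖ * ‖q‖ * (2 * co ^ 2 - 1)) :
    ⟪v, p⟫ ≤ ‖v‖ * ‖p‖ * co ∨ ⟪v, q⟫ ≤ ‖v‖ * ‖q‖ * co := by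
  by_contra hcon
  push_neg at hcon
  obtain ⟨h1, h2⟩ := hcon
  have hp : 0 < ‖p‖ := by
    rcases (norm_nonneg p).lt_or_eq with h | h
    · exact h
    · exfalso
      have : p = 0 := by simpa using h.symm
      simp [this] at h1
  have hq : 0 < ‖q‖ := by
    rcases (norm_nonneg q).lt_or_eq with h | h
    · exact h
    · exfalso
      have : q = 0 := by simpa using h.symm
      simp [this] at h2
  set z := ‖q‖ • p + ‖p‖ • q with hz
  have hvz : ⟪v, z⟫ = ‖q‖ * ⟪v, p⟫ + ‖p‖ * ⟪v, q⟫ := by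
    rw [hz, inner_add_right, real_inner_smul_right, real_inner_smul_right]
  have hzz : ⟪z, z⟫ = 4 * ‖p‖ ^ 2 * ‖q‖ ^ 2 * co ^ 2 := by
    simp only [hz, inner_add_left, inner_add_right, real_inner_smul_left,
      real_inner_smul_right]
    rw [real_inner_self_eq_norm_sq, real_inner_self_eq_norm_sq,
      real_inner_comm p q, h]
    ring
  have hX : 2 * ‖v‖ * ‖p‖ * ‖q‖ * co < ⟪v, z⟫ := by
    rw [hvz]
    nlinarith [mul_lt_mul_of_pos_left h1 hq, mul_lt_mul_of_pos_left h2 hp]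
  have hM : 0 ≤ 2 * ‖v‖ * ‖p‖ * ‖q‖ * co := by positivity
  have hCS : ⟪v, z⟫ * ⟪v, z⟫ ≤ ⟪v, v⟫ * ⟪z, z⟫ := real_inner_mul_inner_self_le v z
  rw [real_inner_self_eq_norm_sq, hzz] at hCS
  nlinarith [mul_self_lt_mul_self hM hX]

open RealInnerProductSpace in
private lemma half_aux {E : Type*} [NormedAddCommGroup E] [InnerProductSpace ℝ E]
    (e f e' : E) (s co si : ℝ) (hs : 0 ≤ s) (hco : 0 ≤ co) (hsi : 0 ≤ si)
    (hcs : co ^ 2 + si ^ 2 = 1)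
    (hc : ⟪e' - e, f - e⟫ ≤ dist e e' * ‖f - e‖ * co)
    (hd : Metric.infDist e' (segment ℝ e f) ≤ s) :
    dist e e' * si ≤ s := by
  set d := dist e e' with hdd
  have hd0 : 0 ≤ d := dist_nonneg
  have hdn : d = ‖e' - e‖ := by rw [hdd, dist_comm, dist_eq_norm]
  have hlow : ∀ x ∈ segment ℝ e f, d * si ≤ dist e' x := by
    rintro x hx
    rw [segment_eq_image'] at hx
    obtain ⟨t, ⟨ht0, ht1⟩, rfl⟩ := hx
    have hdist : dist e' (e + t • (f - e)) = ‖(e' - e) - t • (f - e)‖ := by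
      rw [dist_eq_norm]
      congr 1
      abel
    rw [hdist]
    have hsq : (d * si) ^ 2 ≤ ‖(e' - e) - t • (f - e)‖ ^ 2 := by
      rw [norm_sub_sq_real, real_inner_smul_right, norm_smul, Real.norm_eq_abs]
      have habs : |t| = t := abs_of_nonneg ht0
      rw [habs]
      have h2 : (t * ‖f - e‖) ^ 2 = t ^ 2 * ‖f - e‖ ^ 2 := by ring
      rw [mul_pow]
      rw [← hdn]
      nlinarith [sq_nonneg (t * ‖f - e‖ - d * co),
        mul_nonneg ht0 (sub_nonneg.2 hc), sq_nonneg (d * si)]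
    have hn : 0 ≤ ‖(e' - e) - t • (f - e)‖ := norm_nonneg _
    nlinarith [mul_nonneg hd0 hsi]
  have hne : (segment ℝ e f).Nonempty := ⟨e, left_mem_segment ℝ e f⟩
  have : d * si ≤ Metric.infDist e' (segment ℝ e f) := by
    refine le_of_not_gt fun hlt => ?_
    obtain ⟨y, hy, hy2⟩ := (Metric.infDist_lt_iff hne).1 hlt
    exact absurd (hlow y hy) (not_le.2 hy2)
  linarith

/-- Offset distance lemma, part (2): a point whose distance to each of the segments
`ef` and `eg` is at most `s` is at distance at most `s / sin(θ/2)` from the apex `e`,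
where `θ ∈ (0, π)` is the angle between `ef` and `eg` at `e`. -/
theorem stmt13 (e f g e' : EuclideanSpace ℝ (Fin 2)) (s θ : ℝ)
    (hs : 0 ≤ s) (hef : f ≠ e) (heg : g ≠ e)
    (hθ : θ = EuclideanGeometry.angle f e g) (hθ0 : 0 < θ) (hθπ : θ < Real.pi)
    (hd1 : Metric.infDist e' (segment ℝ e f) ≤ s)
    (hd2 : Metric.infDist e' (segment ℝ e g) ≤ s) :
    dist e e' ≤ s / Real.sin (θ / 2) := by
  have hhalf0 : 0 < θ / 2 := by linarith
  have hhalfπ : θ / 2 < Real.pi / 2 := by linarith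
  have hsipos : 0 < Real.sin (θ / 2) :=
    Real.sin_pos_of_pos_of_lt_pi hhalf0 (by linarith [Real.pi_pos])
  have hcopos : 0 < Real.cos (θ / 2) := Real.cos_pos_of_mem_Ioo ⟨by linarith, hhalfπ⟩
  set co := Real.cos (θ / 2)
  set si := Real.sin (θ / 2)
  have hcs : co ^ 2 + si ^ 2 = 1 := by
    have := Real.sin_sq_add_cos_sq (θ / 2); linarith
  have hcosθ : Real.cos θ = 2 * co ^ 2 - 1 := by
    have h := Real.cos_sq (θ / 2)
    rw [show 2 * (θ / 2) = θ by ring] at h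
    linarith
  have hinner : (inner ℝ (f - e) (g - e) : ℝ) = ‖f - e‖ * ‖g - e‖ * (2 * co ^ 2 - 1) := by
    have h1 : Real.cos (EuclideanGeometry.angle f e g) * (‖f - e‖ * ‖g - e‖)
        = (inner ℝ (f - e) (g - e) : ℝ) := by
      have := InnerProductGeometry.cos_angle_mul_norm_mul_norm (f - e) (g - e)
      simpa [EuclideanGeometry.angle, vsub_eq_sub] using this
    rw [← h1, ← hθ, hcosθ]; ring
  have hkey := key_aux (e' - e) (f - e) (g - e) co hcopos.le hinner
  have hmain : dist e e' * si ≤ s := by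
    rcases hkey with h | h
    · exact half_aux e f e' s co si hs hcopos.le hsipos.le hcs
        (by rwa [dist_comm, dist_eq_norm] ) hd1
    · exact half_aux e g e' s co si hs hcopos.le hsipos.le hcs
        (by rwa [dist_comm, dist_eq_norm]) hd2
  rw [le_div_iff₀ hsipos]
  exact hmain
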